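/- Let A be an acyclic simple digraph on {1,…,n} (n ≥ 2) and let α ∈ ⟨A⟩. Then ℓ(A, α) ≤ Σ_{v=1}^{n} ψ_A(v, vα), where ψ_A(u, w) denotes the maximal number of edges of a directed path in A from u to w (with ψ_A(u, u) = 0). -/

import Mathlib

noncomputable section

variable {V : Type*}

/-- The arc `(a→b)`: the map sending `a` to `b` and fixing every other point. -/
def arcMap [DecidableEq V] (a b : V) : V → V := fun x => if x = a then b else x

/-- Evaluate a word of arcs, applying the arcs from left to right. -/
def wordEval [DecidableEq V] (w : List (V × V)) : V → V :=
  fun x => w.foldl (fun y e => arcMap e.1 e.2 y) x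

/-- `α ∈ ⟨D⟩`: `α` is a (nonempty) product of arcs of the digraph `D`. -/
def InGen [DecidableEq V] (D : V → V → Prop) (α : V → V) : Prop :=
  ∃ w : List (V × V), w ≠ [] ∧ (∀ e ∈ w, D e.1 e.2) ∧ wordEval w = α

/-- `ℓ(D, α)`: the minimal length of a word in the arcs of `D` expressing `α`. -/
def arcLen [DecidableEq V] (D : V → V → Prop) (α : V → V) : ℕ :=
  sInf {k | ∃ w : List (V × V), w.length = k ∧ (∀ e ∈ w, D e.1 e.2) ∧ wordEval w = α}

/-- `fix(α)`: the number of fixed points of `α`. -/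
def fixCnt (α : V → V) : ℕ := Set.ncard {x | α x = x}

/-- `rk(α)`: the rank of `α`, i.e. the cardinality of its image. -/
def rnk (α : V → V) : ℕ := Set.ncard (Set.range α)

/-- A set `C` is a cyclic orbit of `α` if it is a weakly connected component of the
functional digraph of `α` (edges `(x, α x)`) which is a directed cycle on at least two
vertices: equivalently, `C` is the forward orbit of a periodic point, has at least two
elements, and is closed under taking preimages. -/
def IsCyclicOrbit (α : V → V) (C : Set V) : Prop :=
  2 ≤ C.ncard ∧ (∃ x ∈ C, (∃ k, 0 < k ∧ α^[k] x = x) ∧ C = {y | ∃ k, α^[k] x = y}) ∧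
    ∀ y : V, α y ∈ C → y ∈ C

/-- `cycl(α)`: the number of cyclic orbits of `α`. -/
def cyclCnt (α : V → V) : ℕ := Set.ncard {C : Set V | IsCyclicOrbit α C}

/-- `D` is connected: any two vertices are joined by a directed path in some direction. -/
def ConnectedDigraph (D : V → V → Prop) : Prop :=
  ∀ u v : V, Relation.ReflTransGen D u v ∨ Relation.ReflTransGen D v u

/-- `D` is closed (equal to its closure): whenever `(b,a)` is an edge lying on a directed
cycle of `D` (i.e. there is a directed path from `a` back to `b`), `(a,b)` is also an edge. -/
def ClosedDigraph (D : V → V → Prop) : Prop :=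
  ∀ a b : V, D b a → Relation.ReflTransGen D a b → D a b

/-- Property (★): if `v0, v1, v2` is a directed path with `d_D(v0,v2) = 2`, then every
out-neighbour of `v1` and of `v2` lies in `{v0, v1, v2}`. -/
def StarCond (D : V → V → Prop) : Prop :=
  ∀ v0 v1 v2 : V, D v0 v1 → D v1 v2 → v0 ≠ v2 → ¬ D v0 v2 →
    ∀ u : V, (D v1 u ∨ D v2 u) → (u = v0 ∨ u = v1 ∨ u = v2)

/-- `C` is a strong component of `D`. -/
def IsSC (D : V → V → Prop) (C : Set V) : Prop :=
  ∃ v : V, C = {u | Relation.ReflTransGen D u v ∧ Relation.ReflTransGen D v u}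

/-- `C1` connects to `C2`: some edge goes from `C1` to `C2`. -/
def ConnectsTo (D : V → V → Prop) (C1 C2 : Set V) : Prop :=
  ∃ v1 ∈ C1, ∃ v2 ∈ C2, D v1 v2

/-- `C1` fully connects to `C2`: all pairs are edges. -/
def FullyConnects (D : V → V → Prop) (C1 C2 : Set V) : Prop :=
  ∀ v1 ∈ C1, ∀ v2 ∈ C2, D v1 v2

/-- A terminal strong component: it connects to no other strong component. -/
def IsTerminalSC (D : V → V → Prop) (C : Set V) : Prop :=
  IsSC D C ∧ ∀ C' : Set V, IsSC D C' → C' ≠ C → ¬ ConnectsTo D C C'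

/-- Property (★★): nonterminal strong components have at most 2 vertices and terminal
strong components have at most 3 vertices. -/
def StarStarCond (D : V → V → Prop) : Prop :=
  ∀ C : Set V, IsSC D C →
    (IsTerminalSC D C → C.ncard ≤ 3) ∧ (¬ IsTerminalSC D C → C.ncard ≤ 2)

/-- The induced subdigraph on `C` is an undirected path `a - b - c` on three vertices. -/
def IsP3 (D : V → V → Prop) (C : Set V) : Prop :=
  ∃ a b c : V, a ≠ b ∧ b ≠ c ∧ a ≠ c ∧ C = {a, b, c} ∧
    ∀ u ∈ C, ∀ w ∈ C,
      (D u w ↔ (u = a ∧ w = b) ∨ (u = b ∧ w = a) ∨ (u = b ∧ w = c) ∨ (u = c ∧ w = b))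

/-- `D` has a subdigraph isomorphic to `H`: an injection mapping edges of `H` to edges of `D`. -/
def HasSubdigraph (D : V → V → Prop) {m : ℕ} (H : Fin m → Fin m → Prop) : Prop :=
  ∃ f : Fin m → V, Function.Injective f ∧ ∀ i j : Fin m, H i j → D (f i) (f j)

/-- `Θ_k`: the directed cycle on `k` vertices. -/
def Theta (k : ℕ) : Fin k → Fin k → Prop := fun i j => (j : ℕ) = ((i : ℕ) + 1) % k

/-- `Γ1` (vertices relabelled from `{1,…,5}` to `{0,…,4}`). -/
def Gamma1 : Fin 5 → Fin 5 → Prop := fun i j =>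
  ((i : ℕ), (j : ℕ)) ∈ [(0,3),(3,0),(1,3),(3,1),(2,3),(3,2),(3,4)]

/-- `Γ2` (vertices relabelled from `{1,…,5}` to `{0,…,4}`). -/
def Gamma2 : Fin 5 → Fin 5 → Prop := fun i j =>
  ((i : ℕ), (j : ℕ)) ∈ [(0,2),(2,0),(1,2),(2,1),(2,3),(3,2),(3,4)]

/-- `Γ3` (vertices relabelled from `{1,…,4}` to `{0,…,3}`). -/
def Gamma3 : Fin 4 → Fin 4 → Prop := fun i j =>
  ((i : ℕ), (j : ℕ)) ∈ [(0,1),(1,2),(2,0),(2,3)]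

/-- `Γ4` (vertices relabelled from `{1,…,5}` to `{0,…,4}`). -/
def Gamma4 : Fin 5 → Fin 5 → Prop := fun i j =>
  ((i : ℕ), (j : ℕ)) ∈ [(0,1),(1,2),(2,3),(3,0),(3,4)]

/-- No subdigraph isomorphic to `Γ1`, `Γ2`, `Γ3`, `Γ4` or `Θ_k` for `k ≥ 5`. -/
def ForbiddenFree (D : V → V → Prop) : Prop :=
  ¬ HasSubdigraph D Gamma1 ∧ ¬ HasSubdigraph D Gamma2 ∧ ¬ HasSubdigraph D Gamma3 ∧
    ¬ HasSubdigraph D Gamma4 ∧ ∀ k : ℕ, 5 ≤ k → ¬ HasSubdigraph D (Theta k)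

/-- `D` is acyclic: it has no directed cycle. -/
def AcyclicRel (D : V → V → Prop) : Prop := ∀ v : V, ¬ Relation.TransGen D v v

/-- `ψ_A(u,w)`: the maximal number of edges of a directed path from `u` to `w` in `A`
(in particular `ψ_A(u,u) = 0`). -/
def psiLongest (A : V → V → Prop) (u w : V) : ℕ :=
  sSup {l | ∃ p : List V, p.Chain' A ∧ p.Nodup ∧
    p.head? = some u ∧ p.getLast? = some w ∧ p.length = l + 1}

/-- `d_D(u,w)`: the minimal number of edges of a directed path from `u` to `w` in `D`. -/
def ddist (D : V → V → Prop) (u w : V) : ℕ :=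
  sInf {l | ∃ p : List V, p.Chain' D ∧ p.head? = some u ∧ p.getLast? = some w ∧
    p.length = l + 1}

/-- A tournament: no loops, and exactly one of `(u,v)`, `(v,u)` is an edge for `u ≠ v`. -/
def IsTournament (D : V → V → Prop) : Prop :=
  (∀ v : V, ¬ D v v) ∧ ∀ u v : V, u ≠ v → (D u v ∨ D v u) ∧ ¬ (D u v ∧ D v u)

/-- A strong (strongly connected) digraph. -/
def IsStrongDigraph (D : V → V → Prop) : Prop :=
  ∀ u v : V, Relation.ReflTransGen D u v

section StmtFifteenAux

variable {n : ℕ} {A : Fin n → Fin n → Prop}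

/-- From any element of a chain there is a reflexive-transitive path to the last element. -/
lemma chain'_last_reach : ∀ (p : List (Fin n)), p.Chain' A → ∀ b ∈ p, ∀ z,
    p.getLast? = some z → Relation.ReflTransGen A b z := by
  intro p
  induction p with
  | nil => intro _ b hb; simp at hb
  | cons x t ih =>
    intro hc b hb z hz
    cases t with
    | nil =>
      simp at hb hz
      subst hb; subst hz
      exact Relation.ReflTransGen.refl
    | cons y t' =>
      change List.IsChain A (x :: y :: t') at hc
      rw [List.isChain_cons_cons] at hc
      rw [List.getLast?_cons_cons] at hz
      rcases List.mem_cons.mp hb with rfl | hb'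
      · exact Relation.ReflTransGen.head hc.1 (ih hc.2 y List.mem_cons_self z hz)
      · exact ih hc.2 b hb' z hz

lemma psi_bdd (u w : Fin n) :
    BddAbove {l | ∃ p : List (Fin n), p.Chain' A ∧ p.Nodup ∧
      p.head? = some u ∧ p.getLast? = some w ∧ p.length = l + 1} := by
  refine ⟨n, ?_⟩
  rintro l ⟨p, -, hnd, -, -, hlen⟩
  have h := hnd.length_le_card
  rw [Fintype.card_fin] at h
  omega

lemma extend_path (hA : AcyclicRel A) {p : List (Fin n)} {v a b : Fin n}
    (hc : p.Chain' A) (hnd : p.Nodup) (hh : p.head? = some v) (hl : p.getLast? = some a)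
    (hab : A a b) :
    (p ++ [b]).Chain' A ∧ (p ++ [b]).Nodup ∧ (p ++ [b]).head? = some v ∧
      (p ++ [b]).getLast? = some b := by
  have hbp : b ∉ p := by
    intro hb
    have h1 : Relation.ReflTransGen A b a := chain'_last_reach p hc b hb a hl
    exact hA b (Relation.TransGen.tail' h1 hab)
  have hpne : p ≠ [] := by rintro rfl; simp at hh
  refine ⟨?_, ?_, ?_, ?_⟩
  · change List.IsChain A (p ++ [b])
    rw [List.isChain_append]
    refine ⟨hc, List.isChain_singleton b, ?_⟩
    intro x hx y hy
    simp only [List.head?_cons, Option.mem_def, Option.some.injEq] at hy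
    rw [hl] at hx
    simp only [Option.mem_def, Option.some.injEq] at hx
    subst hx; subst hy
    exact hab
  · rw [List.nodup_append]
    exact ⟨hnd, List.nodup_singleton b, by intro a ha c hc; simp at hc; subst hc; rintro rfl; exact hbp ha⟩
  · rw [List.head?_append_of_ne_nil _ hpne]
    exact hh
  · exact List.getLast?_concat

lemma exists_path (hA : AcyclicRel A) (w : List (Fin n × Fin n))
    (hw : ∀ e ∈ w, A e.1 e.2) (x : Fin n) :
    ∃ p : List (Fin n), p.Chain' A ∧ p.Nodup ∧ p.head? = some x ∧
      p.getLast? = some (wordEval w x) := by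
  induction w using List.reverseRecOn with
  | nil => exact ⟨[x], List.isChain_singleton x, List.nodup_singleton x, rfl, rfl⟩
  | append_singleton w e ih =>
    have hw' : ∀ e' ∈ w, A e'.1 e'.2 := fun e' he' => hw e' (by simp [he'])
    obtain ⟨p, hc, hnd, hh, hl⟩ := ih hw'
    have heval : wordEval (w ++ [e]) x = arcMap e.1 e.2 (wordEval w x) := by
      simp [wordEval]
    by_cases hya : wordEval w x = e.1
    · have he : A e.1 e.2 := hw e (by simp)
      have : wordEval (w ++ [e]) x = e.2 := by
        rw [heval, hya, arcMap]; simp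
      rw [this]
      obtain ⟨c1, c2, c3, c4⟩ := extend_path hA hc hnd hh (hya ▸ hl) he
      exact ⟨p ++ [e.2], c1, c2, c3, c4⟩
    · have : wordEval (w ++ [e]) x = wordEval w x := by
        rw [heval, arcMap]; simp [hya]
      rw [this]
      exact ⟨p, hc, hnd, hh, hl⟩

lemma psi_step (hA : AcyclicRel A) {v a b : Fin n} (hab : A a b)
    (hp : ∃ p : List (Fin n), p.Chain' A ∧ p.Nodup ∧ p.head? = some v ∧
      p.getLast? = some a) :
    psiLongest A v a + 1 ≤ psiLongest A v b := by
  have hne : {l | ∃ p : List (Fin n), p.Chain' A ∧ p.Nodup ∧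
      p.head? = some v ∧ p.getLast? = some a ∧ p.length = l + 1}.Nonempty := by
    obtain ⟨p, h1, h2, h3, h4⟩ := hp
    have hpne : p ≠ [] := by rintro rfl; simp at h3
    have hlen : 1 ≤ p.length := List.length_pos_iff.mpr hpne
    exact ⟨p.length - 1, p, h1, h2, h3, h4, by omega⟩
  have hmem := Nat.sSup_mem hne (psi_bdd v a)
  obtain ⟨p, hc, hnd, hh, hl, hlen⟩ := hmem
  obtain ⟨c1, c2, c3, c4⟩ := extend_path hA hc hnd hh hl hab
  have hmem' : psiLongest A v a + 1 ∈ {l | ∃ p : List (Fin n), p.Chain' A ∧ p.Nodup ∧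
      p.head? = some v ∧ p.getLast? = some b ∧ p.length = l + 1} :=
    ⟨p ++ [b], c1, c2, c3, c4, by simp [psiLongest, hlen]⟩
  exact le_csSup (psi_bdd v b) hmem'

lemma main_bound (hA : AcyclicRel A) (w : List (Fin n × Fin n))
    (hw : ∀ e ∈ w, A e.1 e.2) :
    arcLen A (wordEval w) ≤ ∑ v : Fin n, psiLongest A v (wordEval w v) := by
  induction w using List.reverseRecOn with
  | nil =>
    have h0 : arcLen A (wordEval ([] : List (Fin n × Fin n))) ≤ 0 :=
      Nat.sInf_le ⟨[], rfl, by simp, rfl⟩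
    exact le_trans h0 (Nat.zero_le _)
  | append_singleton w e ih =>
    have hw' : ∀ e' ∈ w, A e'.1 e'.2 := fun e' he' => hw e' (by simp [he'])
    have he : A e.1 e.2 := hw e (by simp)
    have heval : ∀ x, wordEval (w ++ [e]) x = arcMap e.1 e.2 (wordEval w x) := by
      intro x; simp [wordEval]
    by_cases hcase : ∃ v, wordEval w v = e.1
    · obtain ⟨v₀, hv₀⟩ := hcase
      -- the set of words evaluating to `wordEval w` is nonempty
      have hβne : {k | ∃ w' : List (Fin n × Fin n), w'.length = k ∧
          (∀ e' ∈ w', A e'.1 e'.2) ∧ wordEval w' = wordEval w}.Nonempty :=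
        ⟨w.length, w, rfl, hw', rfl⟩
      obtain ⟨w', hlen', hw'', hev'⟩ := Nat.sInf_mem hβne
      have h1 : arcLen A (wordEval (w ++ [e])) ≤ arcLen A (wordEval w) + 1 := by
        apply Nat.sInf_le
        refine ⟨w' ++ [e], by simp [hlen', arcLen], ?_, ?_⟩
        · intro e' he'
          rcases List.mem_append.mp he' with h | h
          · exact hw'' e' h
          · simp at h; subst h; exact he
        · funext x
          have : wordEval (w' ++ [e]) x = arcMap e.1 e.2 (wordEval w' x) := by
            simp [wordEval]
          rw [this, hev', heval x]
      have hle : ∀ v : Fin n, psiLongest A v (wordEval w v) ≤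
          psiLongest A v (wordEval (w ++ [e]) v) := by
        intro v
        by_cases hv : wordEval w v = e.1
        · have h2 : wordEval (w ++ [e]) v = e.2 := by
            rw [heval v, hv, arcMap]; simp
          rw [h2, hv]
          have hp := exists_path hA w hw' v
          rw [hv] at hp
          exact le_trans (Nat.le_succ _) (psi_step hA he hp)
        · have h2 : wordEval (w ++ [e]) v = wordEval w v := by
            rw [heval v, arcMap]; simp [hv]
          rw [h2]
      have hlt : psiLongest A v₀ (wordEval w v₀) <
          psiLongest A v₀ (wordEval (w ++ [e]) v₀) := by
        have h2 : wordEval (w ++ [e]) v₀ = e.2 := by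
          rw [heval v₀, hv₀, arcMap]; simp
        rw [h2, hv₀]
        have hp := exists_path hA w hw' v₀
        rw [hv₀] at hp
        exact lt_of_lt_of_le (Nat.lt_succ_self _) (psi_step hA he hp)
      have h2 : ∑ v : Fin n, psiLongest A v (wordEval w v) <
          ∑ v : Fin n, psiLongest A v (wordEval (w ++ [e]) v) :=
        Finset.sum_lt_sum (fun i _ => hle i) ⟨v₀, Finset.mem_univ v₀, hlt⟩
      calc arcLen A (wordEval (w ++ [e])) ≤ arcLen A (wordEval w) + 1 := h1
        _ ≤ ∑ v : Fin n, psiLongest A v (wordEval w v) + 1 :=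
            Nat.add_le_add_right (ih hw') 1
        _ ≤ ∑ v : Fin n, psiLongest A v (wordEval (w ++ [e]) v) := Nat.succ_le_of_lt h2
    · push_neg at hcase
      have heq : wordEval (w ++ [e]) = wordEval w := by
        funext x
        rw [heval x, arcMap]
        simp [hcase x]
      rw [heq]
      exact ih hw'

end StmtFifteenAux

/-- for an acyclic simple digraph `A` on `{1,…,n}` (`n ≥ 2`) and `α ∈ ⟨A⟩`,
`ℓ(A, α) ≤ Σ_v ψ_A(v, vα)`, where `ψ_A(u,w)` is the maximal number of edges of a directed
path from `u` to `w` in `A`. -/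
theorem stmt15 (n : ℕ) (hn : 2 ≤ n) (A : Fin n → Fin n → Prop) (hA : AcyclicRel A)
    (α : Fin n → Fin n) (hα : InGen A α) :
    arcLen A α ≤ ∑ v : Fin n, psiLongest A v (α v) := by
  obtain ⟨w, -, hw, hev⟩ := hα
  rw [← hev]
  exact main_bound hA w hw
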